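/- For every positive integer n, the number r_2(n) of representations of n as an ordered sum of two squares of integers satisfies r_2(n) = 4 * \sum_{d | n} \chi_4(d), where \chi_4 is the nontrivial Dirichlet character modulo 4. -/

import Mathlib

open Zsqrtd

namespace Jacobi2Sq

local notation "R" => GaussianInt

lemma norm_def' (z : R) : z.norm = z.re * z.re + z.im * z.im := by
  simp [Zsqrtd.norm_def]

lemma finite_norm (n : ℤ) : {z : R | z.norm = n}.Finite := by
  apply Set.Finite.subset (Set.Finite.image (f := fun p : ℤ × ℤ => (⟨p.1, p.2⟩ : R))
    ((Set.finite_Icc (-n) n).prod (Set.finite_Icc (-n) n)))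
  intro z hz
  simp only [Set.mem_setOf_eq] at hz
  rw [norm_def'] at hz
  have h1 : z.re ∈ Set.Icc (-n) n := by
    constructor <;> nlinarith [sq_nonneg z.re, sq_nonneg z.im, sq_nonneg (z.re - 1), sq_nonneg (z.re + 1)]
  have h2 : z.im ∈ Set.Icc (-n) n := by
    constructor <;> nlinarith [sq_nonneg z.re, sq_nonneg z.im, sq_nonneg (z.im - 1), sq_nonneg (z.im + 1)]
  exact ⟨(z.re, z.im), ⟨h1, h2⟩, rfl⟩

noncomputable def sf (n : ℕ) : Finset R := (finite_norm n).toFinset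

lemma mem_sf {n : ℕ} {z : R} : z ∈ sf n ↔ z.norm = n := by
  simp [sf, Set.Finite.mem_toFinset]

def U : Finset R := {1, -1, ⟨0,1⟩, ⟨0,-1⟩}

lemma mem_U {z : R} : z ∈ U ↔ z.norm = 1 := by
  constructor
  · intro h
    fin_cases h <;> simp [norm_def']
  · intro h
    rw [norm_def'] at h
    obtain ⟨x, y⟩ := z
    simp only at h
    have h1 : -1 ≤ x ∧ x ≤ 1 := abs_le_of_sq_le_sq' (by nlinarith [mul_self_nonneg y]) one_pos.le
    have h2 : -1 ≤ y ∧ y ≤ 1 := abs_le_of_sq_le_sq' (by nlinarith [mul_self_nonneg x]) one_pos.le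
    obtain ⟨ha, hb⟩ := h1; obtain ⟨hc, hd⟩ := h2
    interval_cases x <;> interval_cases y <;> simp_all <;> decide

lemma card_U : U.card = 4 := by decide

lemma unit_mul_star {u : R} (h : u.norm = 1) : u * star u = 1 := by
  have := Zsqrtd.norm_eq_mul_conj u
  rw [h] at this; exact_mod_cast this.symm

lemma isUnit_iff_norm {z : R} : IsUnit z ↔ z.norm = 1 :=
  (Zsqrtd.norm_eq_one_iff' (by norm_num) z).symm

lemma dvd_norm (z : R) : z ∣ (z.norm : R) := by
  rw [Zsqrtd.norm_eq_mul_conj]; exact dvd_mul_right _ _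

lemma norm_dvd_of_dvd {z w : R} (h : z ∣ w) : z.norm ∣ w.norm :=
  Zsqrtd.normMonoidHom.map_dvd h

lemma normStar (z : R) : (star z).norm = z.norm := by
  simp [Zsqrtd.norm_def]

lemma prime_of_norm_prime {q : R} (h : Prime q.norm) : Prime q := by
  rw [← UniqueFactorizationMonoid.irreducible_iff_prime]
  constructor
  · intro hu
    rw [isUnit_iff_norm] at hu
    exact h.not_unit (by rw [hu]; exact isUnit_one)
  · intro a b hab
    have : q.norm = a.norm * b.norm := by rw [hab, Zsqrtd.norm_mul]
    rcases (h.irreducible.isUnit_or_isUnit this) with hu | hu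
    · left
      rw [isUnit_iff_norm]
      rcases Int.isUnit_iff.mp hu with h1 | h1
      · exact h1
      · exfalso; have := GaussianInt.norm_nonneg a; omega
    · right
      rw [isUnit_iff_norm]
      rcases Int.isUnit_iff.mp hu with h1 | h1
      · exact h1
      · exfalso; have := GaussianInt.norm_nonneg b; omega

lemma exists_nat_prime_dvd {q : R} (hq : Prime q) :
    ∀ t : ℕ, 2 ≤ t → q ∣ (t : R) → ∃ p : ℕ, p.Prime ∧ p ∣ t ∧ q ∣ (p : R) := by
  intro t
  induction t using Nat.strong_induction_on with
  | _ t ih =>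
    intro ht hdvd
    by_cases hp : t.Prime
    · exact ⟨t, hp, dvd_rfl, hdvd⟩
    · obtain ⟨a, ha, ha1, hat⟩ := (Nat.exists_dvd_of_not_prime2 ht hp : ∃ m, m ∣ t ∧ 2 ≤ m ∧ m < t)
      obtain ⟨b, rfl⟩ := ha
      have hb : 2 ≤ b := by nlinarith
      rcases hq.dvd_mul.mp (by push_cast at hdvd ⊢; exact hdvd) with h | h
      · obtain ⟨p, hp, hpd, hqd⟩ := ih a hat ha1 h
        exact ⟨p, hp, hpd.mul_right _, hqd⟩
      · obtain ⟨p, hp, hpd, hqd⟩ := ih b (by nlinarith) hb h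
        exact ⟨p, hp, hpd.mul_left _, hqd⟩


lemma norm_ne_zero_of_pos {z : R} {m : ℕ} (h : z.norm = m) (hm : 0 < m) : z ≠ 0 := by
  intro h0; rw [h0] at h; simp at h; omega

lemma split_unique {m n : ℕ} (hmn : Nat.Coprime m n) (hm : 0 < m) (hn : 0 < n)
    {z₁ z₂ w₁ w₂ : R} (h1 : z₁.norm = m) (h2 : z₂.norm = n) (h3 : w₁.norm = m) (h4 : w₂.norm = n)
    (heq : w₁ * w₂ = z₁ * z₂) : ∃ u : R, u.norm = 1 ∧ w₁ = z₁ * u ∧ w₂ = star u * z₂ := by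
  have hz1 : z₁ ≠ 0 := norm_ne_zero_of_pos h1 hm
  have hw1 : w₁ ≠ 0 := norm_ne_zero_of_pos h3 hm
  have hcop : IsCoprime w₁ z₂ := by
    rw [← EuclideanDomain.gcd_isUnit_iff]
    set g := EuclideanDomain.gcd w₁ z₂ with hg
    have hd1 : g.norm ∣ (m : ℤ) := h3 ▸ norm_dvd_of_dvd (EuclideanDomain.gcd_dvd_left _ _)
    have hd2 : g.norm ∣ (n : ℤ) := h2 ▸ norm_dvd_of_dvd (EuclideanDomain.gcd_dvd_right _ _)
    have hd1' : g.norm.natAbs ∣ m := by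
      rw [← Int.natAbs_natCast m]; exact Int.natAbs_dvd_natAbs.mpr hd1
    have hd2' : g.norm.natAbs ∣ n := by
      rw [← Int.natAbs_natCast n]; exact Int.natAbs_dvd_natAbs.mpr hd2
    have : g.norm.natAbs ∣ Nat.gcd m n := Nat.dvd_gcd hd1' hd2'
    rw [hmn] at this
    exact Zsqrtd.norm_eq_one_iff.mp (Nat.dvd_one.mp this)
  have hdvd : w₁ ∣ z₁ * z₂ := ⟨w₂, heq.symm⟩
  obtain ⟨c, hc⟩ := hcop.dvd_of_dvd_mul_right hdvd
  have hcn : c.norm = 1 := by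
    have : (m : ℤ) = (m : ℤ) * c.norm := by
      conv_lhs => rw [← h1]
      rw [hc, Zsqrtd.norm_mul, h3]
    have hm' : (m : ℤ) ≠ 0 := by exact_mod_cast hm.ne'
    replace this : c.norm = 1 := mul_left_cancel₀ hm' (by rw [mul_one]; exact this.symm)
    omega
  refine ⟨star c, by rw [normStar]; exact hcn, ?_, ?_⟩
  · rw [hc, mul_assoc, unit_mul_star hcn, mul_one]
  · rw [star_star]
    have : w₁ * w₂ = w₁ * (c * z₂) := by rw [heq, hc]; ring
    exact mul_left_cancel₀ hw1 this

lemma norm_natAbs_mul (z w : R) : (z*w).norm.natAbs = z.norm.natAbs * w.norm.natAbs := by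
  rw [Zsqrtd.norm_mul, Int.natAbs_mul]

lemma split_exists (z : R) : ∀ m n : ℕ, Nat.Coprime m n → z.norm = m * n →
    ∃ z₁ z₂ : R, z = z₁ * z₂ ∧ z₁.norm = m ∧ z₂.norm = n := by
  induction z using UniqueFactorizationMonoid.induction_on_prime with
  | h₁ =>
    intro m n hmn hz
    simp only [Zsqrtd.norm_zero] at hz
    rcases mul_eq_zero.mp hz.symm with h | h
    · have hm : m = 0 := by exact_mod_cast h
      have hn : n = 1 := by simpa [hm] using hmn.symm
      exact ⟨0, 1, by ring, by simp [hm], by simp [hn]⟩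
    · have hn : n = 0 := by exact_mod_cast h
      have hm : m = 1 := by simpa [hn] using hmn
      exact ⟨1, 0, by ring, by simp [hm], by simp [hn]⟩
  | h₂ x hx =>
    intro m n hmn hz
    have h1 : x.norm = 1 := isUnit_iff_norm.mp hx
    have hm : m * n = 1 := by
      have h2 := hz
      rw [h1] at h2
      exact_mod_cast h2.symm
    have hm1 : m = 1 := Nat.eq_one_of_mul_eq_one_right hm
    have hn1 : n = 1 := Nat.eq_one_of_mul_eq_one_left hm
    exact ⟨x, 1, by ring, by rw [h1, hm1]; norm_num, by rw [hn1]; simp⟩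
  | h₃ w q hw hq ih =>
    intro m n hmn hz
    set t := q.norm.natAbs with ht
    have hqnn : (0:ℤ) ≤ q.norm := GaussianInt.norm_nonneg q
    have htq : (t : ℤ) = q.norm := Int.natAbs_of_nonneg hqnn
    have ht2 : 2 ≤ t := by
      rcases Nat.lt_or_ge t 2 with h | h
      · interval_cases t
        · exact absurd (GaussianInt.norm_eq_zero.mp htq.symm) hq.ne_zero
        · exact absurd (Zsqrtd.norm_eq_one_iff.mp ht.symm) hq.not_unit
      · exact h
    have hqt : q ∣ (t : R) := by
      have := dvd_norm q
      rwa [← htq] at this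
    obtain ⟨p, hp, hpt, hqp⟩ := exists_nat_prime_dvd hq t ht2 hqt
    have htp2 : t ∣ p ^ 2 := by
      have h1 : q.norm ∣ ((p : R)).norm := norm_dvd_of_dvd hqp
      rw [Zsqrtd.norm_natCast] at h1
      have : (t : ℤ) ∣ ((p ^ 2 : ℕ) : ℤ) := by rw [htq]; push_cast; convert h1 using 1; ring
      exact_mod_cast this
    set s := w.norm.natAbs with hs
    have hwnn : (0:ℤ) ≤ w.norm := GaussianInt.norm_nonneg w
    have hsw : (s : ℤ) = w.norm := Int.natAbs_of_nonneg hwnn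
    have htmn : t * s = m * n := by
      have h2 := norm_natAbs_mul q w
      have h3 : (q * w).norm.natAbs = m * n := by
        rw [hz, ← Nat.cast_mul, Int.natAbs_natCast]
      rw [ht, hs, ← h2, h3]
    have ht0 : 0 < t := by omega
    have htmn' : t ∣ m * n := Dvd.intro s htmn
    obtain ⟨i, hi2, hti⟩ := (Nat.dvd_prime_pow hp).mp htp2
    have hpmn : p ∣ m ∨ p ∣ n := (Nat.Prime.dvd_mul hp).mp (hpt.trans htmn')
    have hkey : ∀ a b : ℕ, Nat.Coprime a b → p ∣ a → ¬ p ∣ b → t ∣ a * b → t ∣ a := by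
      intro a b hab hpa hpb htab
      have hcop : Nat.Coprime t b := by
        rw [hti]
        exact (hp.coprime_iff_not_dvd.mpr hpb).pow_left i
      exact (Nat.Coprime.dvd_of_dvd_mul_right hcop htab)
    have hnd : ¬ (p ∣ m ∧ p ∣ n) := by
      rintro ⟨h1, h2⟩
      have := Nat.dvd_gcd h1 h2
      rw [hmn] at this
      exact hp.one_lt.ne' (Nat.dvd_one.mp this)
    rcases hpmn with hpm | hpn
    · have hpn' : ¬ p ∣ n := fun h => hnd ⟨hpm, h⟩
      have htm : t ∣ m := hkey m n hmn hpm hpn' htmn'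
      obtain ⟨m', rfl⟩ := htm
      have hsm : s = m' * n := by
        have : t * s = t * (m' * n) := by rw [htmn]; ring
        exact Nat.eq_of_mul_eq_mul_left ht0 this
      have hwn : w.norm = (m' : ℤ) * n := by
        rw [← hsw, hsm]; push_cast; ring
      obtain ⟨w₁, w₂, hw12, hn1, hn2⟩ := ih m' n (Nat.Coprime.coprime_dvd_left (Dvd.intro_left t rfl) hmn) hwn
      refine ⟨q * w₁, w₂, by rw [hw12]; ring, ?_, hn2⟩
      rw [Zsqrtd.norm_mul, hn1, ← htq]; push_cast; ring
    · have hpm' : ¬ p ∣ m := fun h => hnd ⟨h, hpn⟩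
      have htn : t ∣ n := hkey n m hmn.symm hpn hpm' (by rwa [mul_comm] at htmn')
      obtain ⟨n', rfl⟩ := htn
      have hsm : s = m * n' := by
        have : t * s = t * (m * n') := by rw [htmn]; ring
        exact Nat.eq_of_mul_eq_mul_left ht0 this
      have hwn : w.norm = (m : ℤ) * n' := by
        rw [← hsw, hsm]; push_cast; ring
      obtain ⟨w₁, w₂, hw12, hn1, hn2⟩ := ih m n' (Nat.Coprime.coprime_dvd_right (Dvd.intro_left t rfl) hmn) hwn
      refine ⟨w₁, q * w₂, by rw [hw12]; ring, hn1, ?_⟩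
      rw [Zsqrtd.norm_mul, hn2, ← htq]; push_cast; ring


lemma exists_prime_divisor {z : R} (h0 : z ≠ 0) (h1 : ¬ IsUnit z) :
    ∃ q : R, Prime q ∧ q ∣ z := by
  obtain ⟨q, hqi, hqd⟩ := WfDvdMonoid.exists_irreducible_factor h1 h0
  exact ⟨q, hqi.prime, hqd⟩

lemma norm_pos_stuff {z : R} {p k : ℕ} (hp : p.Prime) (hk : 0 < k) (h : z.norm = (p:ℤ)^k) :
    z ≠ 0 ∧ ¬ IsUnit z := by
  constructor
  · intro h0; rw [h0, Zsqrtd.norm_zero] at h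
    exact (pow_ne_zero k (by exact_mod_cast hp.ne_zero : (p:ℤ) ≠ 0)) h.symm
  · intro hu
    have h1 : z.norm = 1 := isUnit_iff_norm.mp hu
    rw [h1] at h
    have h2 : p ^ k = 1 := by exact_mod_cast h.symm
    have := Nat.one_lt_pow hk.ne' hp.one_lt
    omega

-- structure for p ≡ 3 mod 4
lemma pow3_structure {p : ℕ} (hp : p.Prime) (hp3 : p % 4 = 3) :
    ∀ k : ℕ, ∀ z : R, z.norm = (p:ℤ)^k →
      ∃ j : ℕ, ∃ u : R, u.norm = 1 ∧ z = u * (p : R)^j ∧ k = 2*j := by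
  haveI : Fact p.Prime := ⟨hp⟩
  have hpR : Prime (p : R) := GaussianInt.prime_of_nat_prime_of_mod_four_eq_three p hp3
  intro k
  induction k using Nat.strong_induction_on with
  | _ k ih =>
    intro z hz
    rcases Nat.eq_zero_or_pos k with rfl | hk
    · exact ⟨0, z, by simpa using hz, by ring, rfl⟩
    obtain ⟨h0, h1⟩ := norm_pos_stuff hp hk hz
    obtain ⟨q, hq, hqz⟩ := exists_prime_divisor h0 h1
    have hqp : q ∣ (p : R) := by
      have h2 : q ∣ ((z.norm : ℤ) : R) := hqz.trans (dvd_norm z)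
      rw [hz] at h2
      have h3 : q ∣ ((p : R))^k := by push_cast at h2; exact_mod_cast h2
      exact hq.dvd_of_dvd_pow h3
    have hassoc : Associated q (p : R) := hq.irreducible.associated_of_dvd hpR.irreducible hqp
    have hpz : (p : R) ∣ z := (hassoc.symm.dvd).trans hqz
    obtain ⟨w, rfl⟩ := hpz
    have hnw : (p:ℤ)^2 * w.norm = (p:ℤ)^k := by
      rw [← hz, Zsqrtd.norm_mul, Zsqrtd.norm_natCast]; ring
    have hk2 : 2 ≤ k := by
      by_contra hlt
      have hk1 : k = 1 := by omega
      subst hk1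
      · have h2 : (p:ℤ)^2 * w.norm = (p:ℤ) := by rw [hnw]; ring
        have hwpos : 0 < w.norm := by
          rcases (GaussianInt.norm_nonneg w).lt_or_eq with h | h
          · exact h
          · exfalso
            rw [← h] at h2
            simp at h2
            exact hp.ne_zero (by exact_mod_cast h2.symm)
        nlinarith [hp.two_le, (by exact_mod_cast hp.two_le : (2:ℤ) ≤ (p:ℤ))]
    have hwn : w.norm = (p:ℤ)^(k-2) := by
      have hpne : ((p:ℤ)^2) ≠ 0 := pow_ne_zero _ (by exact_mod_cast hp.ne_zero)
      have : (p:ℤ)^2 * w.norm = (p:ℤ)^2 * (p:ℤ)^(k-2) := by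
        rw [hnw, ← pow_add]; congr 1; omega
      exact mul_left_cancel₀ hpne this
    obtain ⟨j, u, hu, hwu, hj⟩ := ih (k-2) (by omega) w hwn
    exact ⟨j+1, u, hu, by rw [hwu]; ring, by omega⟩

def lam : R := ⟨1, 1⟩

lemma norm_lam : lam.norm = 2 := by simp [Zsqrtd.norm_def, lam]

lemma prime_lam : Prime lam := prime_of_norm_prime (by rw [norm_lam]; exact Int.prime_two)

lemma star_lam_assoc : star lam = lam * ⟨0, -1⟩ := by
  simp [lam, Zsqrtd.ext_iff, Zsqrtd.re_mul, Zsqrtd.im_mul]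

lemma two_eq_lam : (2 : R) = lam * star lam := by
  have := Zsqrtd.norm_eq_mul_conj lam
  rw [norm_lam] at this
  exact_mod_cast this

lemma pow2_structure :
    ∀ k : ℕ, ∀ z : R, z.norm = (2:ℤ)^k →
      ∃ u : R, u.norm = 1 ∧ z = u * lam^k := by
  intro k
  induction k with
  | zero => intro z hz; exact ⟨z, by simpa using hz, by ring⟩
  | succ k ih =>
    intro z hz
    obtain ⟨h0, h1⟩ := norm_pos_stuff Nat.prime_two (Nat.succ_pos k) (by exact_mod_cast hz)
    obtain ⟨q, hq, hqz⟩ := exists_prime_divisor h0 h1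
    have hq2 : q ∣ ((2:ℕ) : R)^(k+1) := by
      have h2 : q ∣ ((z.norm : ℤ) : R) := hqz.trans (dvd_norm z)
      rw [hz] at h2
      push_cast at h2 ⊢
      exact_mod_cast h2
    have hql : q ∣ lam := by
      have h3 := hq.dvd_of_dvd_pow hq2
      rw [(by push_cast [two_eq_lam]; ring : ((2:ℕ) : R) = lam * star lam)] at h3
      rcases hq.dvd_mul.mp h3 with h | h
      · exact h
      · rw [star_lam_assoc] at h
        have : Prime (⟨0,-1⟩ : R) → False := fun hpp => hpp.not_unit (isUnit_iff_norm.mpr (by simp [Zsqrtd.norm_def]))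
        rcases hq.dvd_mul.mp h with h' | h'
        · exact h'
        · exfalso
          have hu : IsUnit (⟨0,-1⟩ : R) := isUnit_iff_norm.mpr (by simp [Zsqrtd.norm_def])
          exact hq.not_unit (isUnit_of_dvd_unit h' hu)
    have hassoc : Associated q lam := hq.irreducible.associated_of_dvd prime_lam.irreducible hql
    have hlz : lam ∣ z := (hassoc.symm.dvd).trans hqz
    obtain ⟨w, rfl⟩ := hlz
    have hwn : w.norm = (2:ℤ)^k := by
      have h2 : (2:ℤ) * w.norm = (2:ℤ) * (2:ℤ)^k := by
        have h3 := Zsqrtd.norm_mul lam w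
        rw [hz, norm_lam] at h3
        rw [← h3]; ring
      exact mul_left_cancel₀ two_ne_zero h2
    obtain ⟨u, hu, hwu⟩ := ih w hwn
    exact ⟨u, hu, by rw [hwu]; ring⟩


lemma pow1_structure {p : ℕ} (hp : p.Prime) {π : R} (hπ : π.norm = p) :
    ∀ k : ℕ, ∀ z : R, z.norm = (p:ℤ)^k →
      ∃ a b : ℕ, ∃ u : R, u.norm = 1 ∧ z = u * π^a * (star π)^b ∧ a + b = k := by
  have hπp : Prime π := prime_of_norm_prime (by rw [hπ]; exact_mod_cast Nat.prime_iff_prime_int.mp hp)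
  have hπs : Prime (star π) := prime_of_norm_prime (by rw [normStar, hπ]; exact_mod_cast Nat.prime_iff_prime_int.mp hp)
  have hpfact : ((p:ℕ) : R) = π * star π := by
    have := Zsqrtd.norm_eq_mul_conj π
    rw [hπ] at this
    exact_mod_cast this
  intro k
  induction k with
  | zero => intro z hz; exact ⟨0, 0, z, by simpa using hz, by ring, rfl⟩
  | succ k ih =>
    intro z hz
    obtain ⟨h0, h1⟩ := norm_pos_stuff hp (Nat.succ_pos k) hz
    obtain ⟨q, hq, hqz⟩ := exists_prime_divisor h0 h1
    have hq2 : q ∣ (π * star π)^(k+1) := by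
      have h2 : q ∣ ((z.norm : ℤ) : R) := hqz.trans (dvd_norm z)
      rw [hz] at h2
      push_cast [hpfact] at h2
      exact h2
    rcases hq.dvd_mul.mp (hq.dvd_of_dvd_pow hq2) with h | h
    · have hassoc : Associated q π := hq.irreducible.associated_of_dvd hπp.irreducible h
      obtain ⟨w, rfl⟩ := (hassoc.symm.dvd).trans hqz
      have hwn : w.norm = (p:ℤ)^k := by
        have h3 := Zsqrtd.norm_mul π w
        rw [hz, hπ] at h3
        have hpne : (p:ℤ) ≠ 0 := by exact_mod_cast hp.ne_zero
        apply mul_left_cancel₀ hpne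
        rw [← h3]; ring
      obtain ⟨a, b, u, hu, hwu, hab⟩ := ih w hwn
      exact ⟨a+1, b, u, hu, by rw [hwu]; ring, by omega⟩
    · have hassoc : Associated q (star π) := hq.irreducible.associated_of_dvd hπs.irreducible h
      obtain ⟨w, rfl⟩ := (hassoc.symm.dvd).trans hqz
      have hwn : w.norm = (p:ℤ)^k := by
        have h3 := Zsqrtd.norm_mul (star π) w
        rw [hz, normStar, hπ] at h3
        have hpne : (p:ℤ) ≠ 0 := by exact_mod_cast hp.ne_zero
        apply mul_left_cancel₀ hpne
        rw [← h3]; ring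
      obtain ⟨a, b, u, hu, hwu, hab⟩ := ih w hwn
      exact ⟨a, b+1, u, hu, by rw [hwu]; ring, by omega⟩

lemma not_dvd_star {p : ℕ} (hp : p.Prime) (hp1 : p % 4 = 1) {π : R} (hπ : π.norm = p) :
    ¬ π ∣ star π := by
  intro hdvd
  obtain ⟨c, hc⟩ := hdvd
  have hcn : c.norm = 1 := by
    have h1 := Zsqrtd.norm_mul π c
    rw [← hc, normStar, hπ] at h1
    have hpne : (p:ℤ) ≠ 0 := by exact_mod_cast hp.ne_zero
    exact (mul_left_cancel₀ hpne (by rw [mul_one, ← h1])).symm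
  have hcU : c ∈ U := mem_U.mpr hcn
  obtain ⟨x, y⟩ := π
  have hn : x * x + y * y = (p:ℤ) := by
    rw [← hπ]; simp [Zsqrtd.norm_def]
  have hsq : ∀ t : ℤ, t * t = (p:ℤ) → False := by
    intro t ht
    have h2 : t.natAbs * t.natAbs = p := by
      have := Int.natAbs_mul t t
      rw [ht] at this
      simpa using this.symm
    rcases (hp.eq_one_or_self_of_dvd t.natAbs ⟨t.natAbs, h2.symm⟩) with h | h
    · rw [h] at h2; simp at h2; exact hp.one_lt.ne' h2.symm
    · rw [h] at h2; nlinarith [hp.two_le]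
  have h2p : ∀ t : ℤ, 2 * (t * t) = (p:ℤ) → False := by
    intro t ht
    have h2 : 2 * (t.natAbs * t.natAbs) = p := by
      have h4 : ((2 * (t.natAbs * t.natAbs) : ℕ) : ℤ) = (p : ℤ) := by
        push_cast
        rw [abs_mul_abs_self]
        exact ht
      exact_mod_cast h4
    have : p % 2 = 0 := by omega
    omega
  fin_cases hcU <;> simp [Zsqrtd.ext_iff, Zsqrtd.re_mul, Zsqrtd.im_mul] at hc
  · have hy : y = 0 := by omega
    exact hsq x (by rw [hy] at hn; simpa using hn)
  · have hx : x = 0 := by omega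
    exact hsq y (by rw [hx] at hn; simpa using hn)
  · exact h2p y (by rw [hc.1] at hn; linear_combination hn)
  · exact h2p y (by rw [hc.1] at hn; linear_combination hn)

lemma norm_pow (z : R) (k : ℕ) : (z^k).norm = z.norm^k := by
  induction k with
  | zero => simp
  | succ k ih => rw [pow_succ, pow_succ, Zsqrtd.norm_mul, ih]

lemma pow1_unique_aux {p : ℕ} (hp : p.Prime) (hp1 : p % 4 = 1) {π : R} (hπ : π.norm = p)
    {a b c d : ℕ} {u v : R} (hu : u.norm = 1) (hv : v.norm = 1)
    (h : u * π^a * (star π)^b = v * π^c * (star π)^d) (hac : a < c) : False := by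
  have hπp : Prime π := prime_of_norm_prime (by rw [hπ]; exact_mod_cast Nat.prime_iff_prime_int.mp hp)
  have hπ0 : π ≠ 0 := hπp.ne_zero
  have hdvd : π^(a+1) ∣ v * π^c * (star π)^d := by
    have : π^(a+1) ∣ π^c := pow_dvd_pow π (by omega)
    exact (this.mul_left v).mul_right _
  rw [← h] at hdvd
  have h2 : π^a * π ∣ π^a * (u * (star π)^b) := by
    rw [← pow_succ]
    convert hdvd using 1
    ring
  have h3 : π ∣ u * (star π)^b := (mul_dvd_mul_iff_left (pow_ne_zero a hπ0)).mp h2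
  rcases hπp.dvd_mul.mp h3 with h4 | h4
  · exact hπp.not_unit (isUnit_of_dvd_unit h4 (isUnit_iff_norm.mpr hu))
  · exact not_dvd_star hp hp1 hπ (hπp.dvd_of_dvd_pow h4)

lemma pow1_unique {p : ℕ} (hp : p.Prime) (hp1 : p % 4 = 1) {π : R} (hπ : π.norm = p)
    {a b c d : ℕ} {u v : R} (hu : u.norm = 1) (hv : v.norm = 1)
    (h : u * π^a * (star π)^b = v * π^c * (star π)^d) (hab : a + b = c + d) :
    a = c ∧ u = v := by
  have hπp : Prime π := prime_of_norm_prime (by rw [hπ]; exact_mod_cast Nat.prime_iff_prime_int.mp hp)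
  have hπ0 : π ≠ 0 := hπp.ne_zero
  have hs0 : star π ≠ 0 := by
    intro h0
    apply hπ0
    have := congrArg star h0
    simpa using this
  have hac : a = c := by
    rcases lt_trichotomy a c with h' | h' | h'
    · exact absurd (pow1_unique_aux hp hp1 hπ hu hv h h') (by simp)
    · exact h'
    · exact absurd (pow1_unique_aux hp hp1 hπ hv hu h.symm h') (by simp)
  subst hac
  have hbd : b = d := by omega
  subst hbd
  refine ⟨rfl, ?_⟩
  have h1 := mul_right_cancel₀ (pow_ne_zero b hs0) h
  exact mul_right_cancel₀ (pow_ne_zero a hπ0) h1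

lemma card_sf_one : (sf 1).card = 4 := by
  have : sf 1 = U := by
    ext z; rw [mem_sf, mem_U]; norm_num
  rw [this, card_U]

lemma card_sf_mul {m n : ℕ} (hm : 0 < m) (hn : 0 < n) (hmn : Nat.Coprime m n) :
    (sf m).card * (sf n).card = 4 * (sf (m*n)).card := by
  rw [← Finset.card_product]
  rw [Finset.card_eq_sum_card_fiberwise (f := fun p : R × R => p.1 * p.2) (t := sf (m*n))
    (fun x hx => by
      rw [Finset.mem_coe, Finset.mem_product] at hx; rw [Finset.mem_coe]; beta_reduce
      rw [mem_sf, Zsqrtd.norm_mul, mem_sf.mp hx.1, mem_sf.mp hx.2]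
      push_cast; ring)]
  have hfib : ∀ z ∈ sf (m*n),
      ((sf m ×ˢ sf n).filter fun a => a.1 * a.2 = z).card = 4 := by
    intro z hz
    have hz' : z.norm = (m : ℤ) * n := by rw [mem_sf.mp hz]; push_cast; ring
    obtain ⟨z₁, z₂, hz12, hn1, hn2⟩ := split_exists z m n hmn hz'
    have hz10 : z₁ ≠ 0 := norm_ne_zero_of_pos hn1 hm
    have himg : ((sf m ×ˢ sf n).filter fun a => a.1 * a.2 = z)
        = U.image (fun u => (z₁ * u, star u * z₂)) := by
      ext ⟨w₁, w₂⟩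
      simp only [Finset.mem_filter, Finset.mem_product, Finset.mem_image, mem_sf, mem_U]
      constructor
      · rintro ⟨⟨hw1, hw2⟩, heq⟩
        obtain ⟨u, hu, he1, he2⟩ := split_unique hmn hm hn hn1 hn2 hw1 hw2 (by rw [heq, hz12])
        exact ⟨u, hu, by rw [he1, he2]⟩
      · rintro ⟨u, hu, heq⟩
        obtain ⟨h1', h2'⟩ := Prod.mk.inj heq
        subst h1'
        subst h2'
        refine ⟨⟨?_, ?_⟩, ?_⟩
        · rw [Zsqrtd.norm_mul, hn1, hu, mul_one]
        · rw [Zsqrtd.norm_mul, normStar, hu, hn2, one_mul]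
        · rw [hz12]
          have h5 : z₁ * u * (star u * z₂) = z₁ * z₂ * (u * star u) := by ring
          rw [h5, unit_mul_star hu, mul_one]
    rw [himg, Finset.card_image_of_injOn, card_U]
    intro u1 h1 u2 h2 he
    have := congrArg Prod.fst he
    simp only at this
    exact mul_left_cancel₀ hz10 this
  rw [Finset.sum_congr rfl hfib, Finset.sum_const, smul_eq_mul, mul_comm]

lemma card_sf_singleclass {n : ℕ} (hn : 0 < n) {c : R} (hc : c.norm = n)
    (hstr : ∀ z : R, z.norm = n → ∃ u : R, u.norm = 1 ∧ z = u * c) :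
    (sf n).card = 4 := by
  have hc0 : c ≠ 0 := norm_ne_zero_of_pos hc hn
  have himg : sf n = U.image (fun u => u * c) := by
    ext z
    simp only [mem_sf, Finset.mem_image, mem_U]
    constructor
    · intro h
      obtain ⟨u, hu, rfl⟩ := hstr z h
      exact ⟨u, hu, rfl⟩
    · rintro ⟨u, hu, rfl⟩
      rw [Zsqrtd.norm_mul, hu, hc, one_mul]
  rw [himg, Finset.card_image_of_injOn (fun u1 _ u2 _ he => mul_right_cancel₀ hc0 he), card_U]

lemma card_sf_two_pow (k : ℕ) : (sf (2^k)).card = 4 := by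
  apply card_sf_singleclass (pow_pos (by norm_num) k) (c := lam^k)
  · rw [norm_pow, norm_lam]; push_cast; ring
  · intro z hz
    exact pow2_structure k z (by rw [hz]; push_cast; ring)

lemma card_sf_p3_pow {p : ℕ} (hp : p.Prime) (hp3 : p % 4 = 3) (k : ℕ) :
    (sf (p^k)).card = if k % 2 = 0 then 4 else 0 := by
  rcases Nat.even_or_odd k with he | ho
  · obtain ⟨j, rfl⟩ := he
    rw [if_pos (by omega)]
    apply card_sf_singleclass (pow_pos hp.pos _) (c := ((p:ℕ) : R)^j)
    · rw [norm_pow, Zsqrtd.norm_natCast]; push_cast; ring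
    · intro z hz
      obtain ⟨j', u, hu, hzu, hj'⟩ := pow3_structure hp hp3 (j + j) z (by rw [hz]; push_cast; ring)
      have : j' = j := by omega
      exact ⟨u, hu, by rw [hzu, this]⟩
  · obtain ⟨j, rfl⟩ := ho
    rw [if_neg (by omega)]
    rw [Finset.card_eq_zero, Finset.eq_empty_iff_forall_notMem]
    intro z hz
    obtain ⟨j', u, hu, hzu, hj'⟩ := pow3_structure hp hp3 (2*j+1) z (by rw [mem_sf.mp hz]; push_cast; ring)
    omega

lemma card_sf_p1_pow {p : ℕ} (hp : p.Prime) (hp1 : p % 4 = 1) (k : ℕ) :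
    (sf (p^k)).card = 4 * (k+1) := by
  haveI : Fact p.Prime := ⟨hp⟩
  obtain ⟨a, b, hab⟩ := Nat.Prime.sq_add_sq (p := p) (by omega)
  set π : R := ⟨(a:ℤ), (b:ℤ)⟩ with hπdef
  have hπ : π.norm = (p : ℤ) := by
    rw [norm_def', hπdef]
    push_cast [← hab]
    ring
  have himg : sf (p^k) = ((Finset.range (k+1)) ×ˢ U).image
      (fun au : ℕ × R => au.2 * π^au.1 * (star π)^(k - au.1)) := by
    ext z
    simp only [mem_sf, Finset.mem_image, Finset.mem_product, Finset.mem_range, mem_U]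
    constructor
    · intro h
      obtain ⟨a', b', u, hu, hzu, hab'⟩ := pow1_structure hp hπ k z (by rw [h]; push_cast; ring)
      refine ⟨(a', u), ⟨by omega, hu⟩, ?_⟩
      simp only
      rw [hzu]
      congr 2
      omega
    · rintro ⟨⟨a', u⟩, ⟨ha', hu⟩, rfl⟩
      simp only
      rw [Zsqrtd.norm_mul, Zsqrtd.norm_mul, hu, norm_pow, norm_pow, normStar, hπ, one_mul, ← pow_add]
      push_cast
      congr 1
      omega
  have hinj : Set.InjOn (fun au : ℕ × R => au.2 * π^au.1 * (star π)^(k - au.1))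
      ↑((Finset.range (k+1)) ×ˢ U) := by
    rintro ⟨a1, u1⟩ h1 ⟨a2, u2⟩ h2 he
    simp only [Finset.coe_product, Set.mem_prod, Finset.mem_coe, Finset.mem_range, mem_U] at h1 h2
    simp only at he
    have := pow1_unique hp hp1 hπ h1.2 h2.2 he (by omega)
    rw [Prod.ext_iff]
    exact ⟨this.1, this.2⟩
  rw [himg, Finset.card_image_of_injOn hinj, Finset.card_product, Finset.card_range, card_U]
  ring

lemma ncard_eq (n : ℕ) :
    Set.ncard {p : ℤ × ℤ | p.1 ^ 2 + p.2 ^ 2 = (n : ℤ)} = (sf n).card := by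
  have hset : {p : ℤ × ℤ | p.1 ^ 2 + p.2 ^ 2 = (n : ℤ)}
      = (fun z : R => (z.re, z.im)) '' ↑(sf n) := by
    ext ⟨x, y⟩
    simp only [Set.mem_setOf_eq, Set.mem_image, Finset.mem_coe, mem_sf]
    constructor
    · intro h
      exact ⟨⟨x, y⟩, by rw [norm_def']; simpa [pow_two] using h, rfl⟩
    · rintro ⟨z, hz, heq⟩
      obtain ⟨hx, hy⟩ := Prod.mk.inj heq
      subst hx; subst hy
      rw [norm_def'] at hz
      rw [← hz]; ring
  have hinj : Function.Injective (fun z : R => (z.re, z.im)) := by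
    intro z w h
    obtain ⟨h1, h2⟩ := Prod.mk.inj h
    cases z; cases w; simp_all
  rw [hset, Set.ncard_image_of_injective _ hinj, Set.ncard_coe_finset]

noncomputable def chi4' : ArithmeticFunction ℤ :=
  ⟨fun d => ZMod.χ₄ (d : ZMod 4), by decide⟩

lemma chi4'_apply (d : ℕ) : chi4' d = ZMod.χ₄ (d : ZMod 4) := rfl

lemma chi4'_mult : chi4'.IsMultiplicative := by
  constructor
  · rw [chi4'_apply]; decide
  · intro m n _
    rw [chi4'_apply, chi4'_apply, chi4'_apply, Nat.cast_mul, map_mul]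

noncomputable def Gfun : ArithmeticFunction ℤ :=
  (ArithmeticFunction.zeta : ArithmeticFunction ℕ) * chi4'

lemma Gfun_apply (n : ℕ) : Gfun n = ∑ d ∈ n.divisors, ZMod.χ₄ (d : ZMod 4) :=
  ArithmeticFunction.coe_zeta_mul_apply

lemma Gfun_mult : Gfun.IsMultiplicative :=
  ArithmeticFunction.isMultiplicative_zeta.natCast.mul chi4'_mult

lemma neg_one_sum : ∀ k : ℕ, ∑ i ∈ Finset.range (k+1), (-1:ℤ)^i = if k % 2 = 0 then 1 else 0 := by
  intro k
  induction k with
  | zero => simp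
  | succ k ih =>
    rw [Finset.sum_range_succ, ih]
    rcases Nat.even_or_odd k with ⟨j, rfl⟩ | ⟨j, rfl⟩
    · rw [if_pos (show (j+j) % 2 = 0 by omega), if_neg (show ¬ (j+j+1) % 2 = 0 by omega),
        Odd.neg_one_pow ⟨j, by omega⟩]
      ring
    · rw [if_neg (show ¬ (2*j+1) % 2 = 0 by omega), if_pos (show (2*j+1+1) % 2 = 0 by omega),
        Even.neg_one_pow ⟨j+1, by omega⟩]
      ring

lemma sum_chi4_prime_pow {p : ℕ} (hp : p.Prime) (k : ℕ) :
    ∑ d ∈ (p^k).divisors, ZMod.χ₄ (d : ZMod 4)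
      = ∑ i ∈ Finset.range (k+1), (ZMod.χ₄ (p : ZMod 4))^i := by
  rw [Nat.sum_divisors_prime_pow hp]
  refine Finset.sum_congr rfl fun i _ => ?_
  rw [Nat.cast_pow, map_pow]

lemma key (n : ℕ) : 0 < n → ((sf n).card : ℤ) = 4 * ∑ d ∈ n.divisors, ZMod.χ₄ (d : ZMod 4) := by
  induction n using Nat.recOnPosPrimePosCoprime with
  | zero => intro h; omega
  | one =>
    intro _
    rw [card_sf_one, Nat.divisors_one]
    decide
  | prime_pow p k hp hk =>
    intro _
    have hpp : p.Prime := hp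
    rw [sum_chi4_prime_pow hpp]
    rcases Nat.lt_or_ge p 3 with h2 | h3
    · have hp2 : p = 2 := by have := hpp.two_le; omega
      subst hp2
      rw [card_sf_two_pow]
      have hchi : ZMod.χ₄ ((2:ℕ) : ZMod 4) = 0 := by decide
      rw [hchi]
      rw [Finset.sum_eq_single_of_mem 0 (Finset.mem_range.mpr (by omega))
        (fun i _ hi => zero_pow hi)]
      norm_num
    · have hodd : p % 2 = 1 := Nat.odd_iff.mp (hpp.odd_of_ne_two (by omega))
      rcases (by omega : p % 4 = 1 ∨ p % 4 = 3) with h1 | h1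
      · rw [card_sf_p1_pow hpp h1, ZMod.χ₄_nat_one_mod_four h1]
        simp only [one_pow, Finset.sum_const, Finset.card_range, smul_eq_mul, mul_one]
        push_cast
        ring
      · rw [card_sf_p3_pow hpp h1, ZMod.χ₄_nat_three_mod_four h1, neg_one_sum]
        rcases (by omega : k % 2 = 0 ∨ k % 2 = 1) with h2 | h2
        · rw [if_pos h2, if_pos h2]
          norm_num
        · rw [if_neg (by omega), if_neg (by omega)]
          norm_num
  | coprime a b ha hb hab iha ihb =>
    intro _
    have hia := iha (by omega)
    have hib := ihb (by omega)
    have hcard := card_sf_mul (by omega : 0 < a) (by omega : 0 < b) hab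
    have hsum : ∑ d ∈ (a*b).divisors, ZMod.χ₄ (d : ZMod 4)
        = (∑ d ∈ a.divisors, ZMod.χ₄ (d : ZMod 4)) * ∑ d ∈ b.divisors, ZMod.χ₄ (d : ZMod 4) := by
      rw [← Gfun_apply, ← Gfun_apply, ← Gfun_apply]
      exact Gfun_mult.map_mul_of_coprime hab
    have hc : ((sf a).card : ℤ) * (sf b).card = 4 * (sf (a*b)).card := by exact_mod_cast hcard
    rw [hia, hib] at hc
    rw [hsum]
    linarith [hc]

end Jacobi2Sq

theorem r2_eq_four_mul_sum_chi4 (n : ℕ) (hn : 0 < n) :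
    (Set.ncard {p : ℤ × ℤ | p.1 ^ 2 + p.2 ^ 2 = (n : ℤ)} : ℤ) =
      4 * ∑ d ∈ n.divisors, ZMod.χ₄ (d : ZMod 4) := by
  rw [Jacobi2Sq.ncard_eq]
  exact Jacobi2Sq.key n hn
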